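/- arXiv:1206.1440 — 3 statements merged into one kernel-verified Lean document; each statement's English description precedes it below -/
import Mathlib

section
/- One-dimensional steady exciton problem with interface: for the equation −D e'' = Q − e/τ on (−L,0) ∪ (0,L) with e(−L) = e(L) = 0, continuity of e at 0, and flux jump [−De']₀⁺ − [−De']₀⁻ = −κ e(0) with κ ≥ 0, D, τ, Q > 0 constants, there exists a unique solution, it is even, nonnegative, and satisfies 0 ≤ e(x) ≤ Qτ for all x. -/
open Real Filter

/-- `e` is a solution of the steady 1D macroscale exciton problem
`-D e'' = Q - e/τ` on `(-L,0) ∪ (0,L)`, with perfect quenching `e(±L)=0`,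
continuity across the interface `x = 0`, and flux-jump condition
`[-D e']₀⁺ - [-D e']₀⁻ = -κ e(0)`. -/
def IsSteadyExcitonSol (L D τ Q κ : ℝ) (e : ℝ → ℝ) : Prop :=
  ContinuousOn e (Set.Icc (-L) L) ∧
  e (-L) = 0 ∧ e L = 0 ∧
  (∀ x ∈ Set.Ioo (-L) 0 ∪ Set.Ioo 0 L,
      DifferentiableAt ℝ e x ∧ DifferentiableAt ℝ (deriv e) x ∧
      -D * deriv (deriv e) x = Q - e x / τ) ∧
  (∃ dplus dminus : ℝ,
      Tendsto (deriv e) (nhdsWithin 0 (Set.Ioi 0)) (nhds dplus) ∧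
      Tendsto (deriv e) (nhdsWithin 0 (Set.Iio 0)) (nhds dminus) ∧
      (-D * dplus) - (-D * dminus) = -κ * e 0)

lemma const_of_deriv0 {a b : ℝ} {F : ℝ → ℝ} (h : ∀ x ∈ Set.Ioo a b, HasDerivAt F 0 x) :
    ∀ x ∈ Set.Ioo a b, ∀ y ∈ Set.Ioo a b, F x = F y := by
  have key : ∀ x ∈ Set.Ioo a b, ∀ y ∈ Set.Ioo a b, x ≤ y → F y = F x := by
    intro x hx y hy hxy
    have hsub : Set.Icc x y ⊆ Set.Ioo a b := fun z hz =>
      ⟨lt_of_lt_of_le hx.1 hz.1, lt_of_le_of_lt hz.2 hy.2⟩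
    have := constant_of_has_deriv_right_zero (f := F) (a := x) (b := y)
      (fun z hz => ((h z (hsub hz)).differentiableAt.continuousAt).continuousWithinAt)
      (fun z hz => ((h z (hsub ⟨hz.1, le_of_lt hz.2⟩)).hasDerivWithinAt))
    exact this y ⟨hxy, le_refl y⟩
  intro x hx y hy
  rcases le_total x y with hxy | hyx
  · exact (key x hx y hy hxy).symm
  · exact key y hy x hx hyx

lemma hasDerivAt_expmul (m x : ℝ) :
    HasDerivAt (fun y : ℝ => Real.exp (m*y)) (m * Real.exp (m*x)) x := by
  have h : HasDerivAt (fun y : ℝ => m*y) m x := by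
    simpa using (hasDerivAt_id x).const_mul m
  simpa [mul_comm] using h.exp

lemma hasDerivAt_g (c A B m x : ℝ) :
    HasDerivAt (fun y : ℝ => c + A * Real.exp (m*y) + B * Real.exp (-(m*y)))
      (m * (A * Real.exp (m*x) - B * Real.exp (-(m*x)))) x := by
  have h1 := (hasDerivAt_expmul m x).const_mul A
  have h2 : HasDerivAt (fun y : ℝ => Real.exp (-(m*y))) (-m * Real.exp (-(m*x))) x := by
    simpa using hasDerivAt_expmul (-m) x
  have h3 := h2.const_mul B
  have := ((hasDerivAt_const x c).add h1).add h3
  exact this.congr_deriv (by ring)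

lemma hasDerivAt_g' (A B m x : ℝ) :
    HasDerivAt (fun y : ℝ => m * (A * Real.exp (m*y) - B * Real.exp (-(m*y))))
      (m^2 * (A * Real.exp (m*x) + B * Real.exp (-(m*x)))) x := by
  have h1 := (hasDerivAt_expmul m x).const_mul A
  have h2 : HasDerivAt (fun y : ℝ => Real.exp (-(m*y))) (-m * Real.exp (-(m*x))) x := by
    simpa using hasDerivAt_expmul (-m) x
  have h3 := h2.const_mul B
  have := (h1.sub h3).const_mul m
  exact this.congr_deriv (by ring)

/-- Representation lemma: any solution of `e'' = μ²(e - c)` on `Ioo a b`. -/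
lemma rep_lemma {a b μ c : ℝ} (hμ : 0 < μ) (hab : a < b) {e : ℝ → ℝ}
    (h : ∀ x ∈ Set.Ioo a b, DifferentiableAt ℝ e x ∧ DifferentiableAt ℝ (deriv e) x ∧
      deriv (deriv e) x = μ^2 * (e x - c)) :
    ∃ A B : ℝ, ∀ x ∈ Set.Ioo a b,
      e x = c + A * Real.exp (μ*x) + B * Real.exp (-(μ*x)) ∧
      deriv e x = μ * (A * Real.exp (μ*x) - B * Real.exp (-(μ*x))) := by
  set F : ℝ → ℝ := fun x => (deriv e x - μ*(e x - c)) * Real.exp (μ*x) with hF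
  set G : ℝ → ℝ := fun x => (deriv e x + μ*(e x - c)) * Real.exp (-(μ*x)) with hG
  have hFd : ∀ x ∈ Set.Ioo a b, HasDerivAt F 0 x := by
    intro x hx
    obtain ⟨h1, h2, h3⟩ := h x hx
    have he' : HasDerivAt (deriv e) (μ^2*(e x - c)) x := h3 ▸ h2.hasDerivAt
    have hee : HasDerivAt e (deriv e x) x := h1.hasDerivAt
    have hin : HasDerivAt (fun y => deriv e y - μ*(e y - c))
        (μ^2*(e x - c) - μ*(deriv e x)) x := by
      have := he'.sub ((hee.sub_const c).const_mul μ)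
      exact this.congr_deriv (by ring)
    have := hin.mul (hasDerivAt_expmul μ x)
    exact this.congr_deriv (by ring)
  have hGd : ∀ x ∈ Set.Ioo a b, HasDerivAt G 0 x := by
    intro x hx
    obtain ⟨h1, h2, h3⟩ := h x hx
    have he' : HasDerivAt (deriv e) (μ^2*(e x - c)) x := h3 ▸ h2.hasDerivAt
    have hee : HasDerivAt e (deriv e x) x := h1.hasDerivAt
    have hin : HasDerivAt (fun y => deriv e y + μ*(e y - c))
        (μ^2*(e x - c) + μ*(deriv e x)) x := by
      have := he'.add ((hee.sub_const c).const_mul μ)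
      exact this.congr_deriv (by ring)
    have hexp : HasDerivAt (fun y : ℝ => Real.exp (-(μ*y))) (-μ * Real.exp (-(μ*x))) x := by
      simpa using hasDerivAt_expmul (-μ) x
    have := hin.mul hexp
    exact this.congr_deriv (by ring)
  set x₀ : ℝ := (a+b)/2 with hx₀
  have hx₀m : x₀ ∈ Set.Ioo a b := ⟨by simp only [hx₀]; linarith, by simp only [hx₀]; linarith⟩
  refine ⟨G x₀ / (2*μ), -F x₀ / (2*μ), ?_⟩
  intro x hx
  have hFc : F x = F x₀ := const_of_deriv0 hFd x hx x₀ hx₀m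
  have hGc : G x = G x₀ := const_of_deriv0 hGd x hx x₀ hx₀m
  have hexp1 : Real.exp (μ*x) * Real.exp (-(μ*x)) = 1 := by
    rw [← Real.exp_add]; simp
  have hμ' : (2*μ) ≠ 0 := by positivity
  have h1 : deriv e x - μ*(e x - c) = F x₀ * Real.exp (-(μ*x)) := by
    have := congrArg (· * Real.exp (-(μ*x))) hFc
    simp only [hF] at this ⊢
    linear_combination this - (deriv e x - μ*(e x - c)) * hexp1
  have h2 : deriv e x + μ*(e x - c) = G x₀ * Real.exp (μ*x) := by
    have := congrArg (· * Real.exp (μ*x)) hGc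
    simp only [hG] at this ⊢
    linear_combination this - (deriv e x + μ*(e x - c)) * hexp1
  constructor
  · have key : 2*μ*(e x - c) = G x₀ * Real.exp (μ*x) - F x₀ * Real.exp (-(μ*x)) := by
      linarith
    field_simp
    linear_combination key
  · have key : 2*(deriv e x) = G x₀ * Real.exp (μ*x) + F x₀ * Real.exp (-(μ*x)) := by
      linarith
    field_simp
    linear_combination key

lemma solve_system (D κ q E μ A B A' B' S T : ℝ) (hD : 0 < D) (hμ : 0 < μ)
    (hκ : 0 ≤ κ) (hq : 0 < q) (hE : 1 < E)
    (hS : S * (2*D*μ*((E+E⁻¹)/2) + κ*((E-E⁻¹)/2)) = -q*(2*D*μ + κ*((E-E⁻¹)/2)))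
    (hT : T * (2*D*μ) = κ*(q + S))
    (e1 : q + A*E + B*E⁻¹ = 0)
    (e2 : q + A'*E⁻¹ + B'*E = 0)
    (e3 : A + B = A' + B')
    (e4 : (-(D*(μ*(A-B)))) - (-(D*(μ*(A'-B')))) = -κ*(q + A + B)) :
    A = (S+T)/2 ∧ B = (S-T)/2 ∧ A' = (S-T)/2 ∧ B' = (S+T)/2 := by
  have hE0 : (0:ℝ) < E := lt_trans zero_lt_one hE
  have hEne : E ≠ 0 := ne_of_gt hE0
  have hEinv : E * E⁻¹ = 1 := mul_inv_cancel₀ hEne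
  have hEinvlt : E⁻¹ < 1 := by
    rw [inv_lt_one_iff₀]; right; exact hE
  have hsh : 0 < (E - E⁻¹)/2 := by linarith
  have hch : 1 ≤ (E + E⁻¹)/2 := by nlinarith [sq_nonneg (E - 1), hE0, hEinv]
  have h2Dμ : 0 < 2*D*μ := by positivity
  have hdenom : 0 < 2*D*μ*((E+E⁻¹)/2) + κ*((E-E⁻¹)/2) := by
    nlinarith [mul_le_mul_of_nonneg_left hch h2Dμ.le, mul_nonneg hκ hsh.le]
  have hp : (A - B')*(E - E⁻¹) = 0 := by linear_combination e1 - e2 - E⁻¹ * e3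
  have hAB' : A = B' := by
    rcases mul_eq_zero.mp hp with h | h
    · linarith [sub_eq_zero.mp h]
    · exfalso; linarith
  have hA'B : A' = B := by linarith
  have hAmB : (A - B)*(2*D*μ) = κ*(q + A + B) := by
    linear_combination (-1 : ℝ)*e4 + (D*μ)*hAB' + (D*μ)*hA'B
  have hSum : (A + B) * (2*D*μ*((E+E⁻¹)/2) + κ*((E-E⁻¹)/2)) = -q*(2*D*μ + κ*((E-E⁻¹)/2)) := by
    linear_combination (2*D*μ)*e1 - ((E-E⁻¹)/2)*hAmB
  have hABS : A + B = S := mul_right_cancel₀ (ne_of_gt hdenom) (hSum.trans hS.symm)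
  have hmu2 : (2*D*μ) ≠ 0 := by positivity
  have hABT : A - B = T := by
    apply mul_right_cancel₀ hmu2
    linear_combination hAmB - hT + κ*hABS
  refine ⟨by linarith, by linarith, by linarith, by linarith⟩

lemma sinh_rep (A B m x l : ℝ) :
    (A*Real.exp (m*x) + B*Real.exp (-(m*x))) * Real.sinh (m*l) =
    (A + B) * Real.sinh (m*(l - x)) + (A*Real.exp (m*l) + B*Real.exp (-(m*l))) * Real.sinh (m*x) := by
  rw [Real.sinh_eq, Real.sinh_eq, Real.sinh_eq,
    show m*(l-x) = m*l - m*x by ring, Real.exp_sub,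
    show -(m*l - m*x) = m*x - m*l by ring, Real.exp_sub,
    Real.exp_neg (m*x), Real.exp_neg (m*l)]
  field_simp
  ring

lemma bound_aux (A B m q l S : ℝ) (hm : 0 < m) (hl : 0 < l) (hq : 0 < q)
    (hAB : A + B = S) (hS1 : -q ≤ S) (hS2 : S ≤ 0)
    (hbd : q + A*Real.exp (m*l) + B*Real.exp (-(m*l)) = 0) :
    ∀ x, 0 ≤ x → x ≤ l → -q ≤ A*Real.exp (m*x) + B*Real.exp (-(m*x)) ∧
      A*Real.exp (m*x) + B*Real.exp (-(m*x)) ≤ 0 := by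
  intro x hx0 hxl
  have hrep := sinh_rep A B m x l
  rw [hAB, show A*Real.exp (m*l) + B*Real.exp (-(m*l)) = -q by linarith] at hrep
  have ha : 0 ≤ Real.sinh (m*(l - x)) := Real.sinh_nonneg_iff.2 (by nlinarith)
  have hb : 0 ≤ Real.sinh (m*x) := Real.sinh_nonneg_iff.2 (by positivity)
  have hshpos : 0 < Real.sinh (m*l) := Real.sinh_pos_iff.2 (by positivity)
  have hsum : Real.sinh (m*(l-x)) + Real.sinh (m*x) ≤ Real.sinh (m*l) := by
    have hadd : Real.sinh (m*(l-x) + m*x) =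
        Real.sinh (m*(l-x)) * Real.cosh (m*x) + Real.cosh (m*(l-x)) * Real.sinh (m*x) :=
      Real.sinh_add _ _
    rw [show m*(l-x) + m*x = m*l by ring] at hadd
    nlinarith [Real.one_le_cosh (m*x), Real.one_le_cosh (m*(l-x))]
  set f := A*Real.exp (m*x) + B*Real.exp (-(m*x)) with hf
  constructor
  · -- -q ≤ f
    have key : (f + q) * Real.sinh (m*l) ≥ 0 := by nlinarith
    nlinarith
  · have key : f * Real.sinh (m*l) ≤ 0 := by nlinarith
    nlinarith

lemma Sbounds (D κ q μ E : ℝ) (hD : 0 < D) (hμ : 0 < μ) (hκ : 0 ≤ κ)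
    (hq : 0 < q) (hE : 1 < E) :
    ∃ S T : ℝ, S*(2*D*μ*((E+E⁻¹)/2) + κ*((E-E⁻¹)/2)) = -q*(2*D*μ + κ*((E-E⁻¹)/2)) ∧
      T*(2*D*μ) = κ*(q+S) ∧ -q ≤ S ∧ S ≤ 0 := by
  have hE0 : (0:ℝ) < E := lt_trans zero_lt_one hE
  have hEne : E ≠ 0 := ne_of_gt hE0
  have hEinv : E * E⁻¹ = 1 := mul_inv_cancel₀ hEne
  have hEinvlt : E⁻¹ < 1 := by rw [inv_lt_one_iff₀]; right; exact hE
  have hsh : 0 < (E - E⁻¹)/2 := by linarith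
  have hch : 1 ≤ (E + E⁻¹)/2 := by nlinarith [sq_nonneg (E - 1), hE0, hEinv]
  have h2Dμ : 0 < 2*D*μ := by positivity
  have hdenom : 0 < 2*D*μ*((E+E⁻¹)/2) + κ*((E-E⁻¹)/2) := by
    nlinarith [mul_le_mul_of_nonneg_left hch h2Dμ.le, mul_nonneg hκ hsh.le]
  set S : ℝ := -q*(2*D*μ + κ*((E-E⁻¹)/2)) / (2*D*μ*((E+E⁻¹)/2) + κ*((E-E⁻¹)/2)) with hSdef
  have hSprod : S*(2*D*μ*((E+E⁻¹)/2) + κ*((E-E⁻¹)/2)) = -q*(2*D*μ + κ*((E-E⁻¹)/2)) :=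
    div_mul_cancel₀ _ (ne_of_gt hdenom)
  refine ⟨S, κ*(q+S)/(2*D*μ), hSprod, div_mul_cancel₀ _ (ne_of_gt h2Dμ), ?_, ?_⟩
  · -- -q ≤ S
    have key : (S + q)*(2*D*μ*((E+E⁻¹)/2) + κ*((E-E⁻¹)/2)) = q*(2*D*μ)*((E+E⁻¹)/2 - 1) := by
      linear_combination hSprod
    have hnn : 0 ≤ (S + q)*(2*D*μ*((E+E⁻¹)/2) + κ*((E-E⁻¹)/2)) := by
      rw [key]
      have : 0 ≤ (E+E⁻¹)/2 - 1 := by linarith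
      positivity
    nlinarith [hnn, hdenom]
  · -- S ≤ 0
    have hnum : -q*(2*D*μ + κ*((E-E⁻¹)/2)) ≤ 0 := by
      have h1 : 0 < 2*D*μ + κ*((E-E⁻¹)/2) := by nlinarith [mul_nonneg hκ hsh.le]
      nlinarith
    nlinarith [hSprod, hdenom]

lemma cont_exp_mul (m : ℝ) : Continuous (fun y : ℝ => Real.exp (m*y)) :=
  Real.continuous_exp.comp (continuous_const.mul continuous_id)

lemma cont_exp_mul_neg (m : ℝ) : Continuous (fun y : ℝ => Real.exp (-(m*y))) :=
  Real.continuous_exp.comp ((continuous_const.mul continuous_id).neg)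

lemma cont_g (c A B m : ℝ) :
    Continuous (fun y : ℝ => c + A*Real.exp (m*y) + B*Real.exp (-(m*y))) :=
  (continuous_const.add (continuous_const.mul (cont_exp_mul m))).add
    (continuous_const.mul (cont_exp_mul_neg m))

lemma cont_g' (A B m : ℝ) :
    Continuous (fun y : ℝ => m*(A*Real.exp (m*y) - B*Real.exp (-(m*y)))) :=
  continuous_const.mul ((continuous_const.mul (cont_exp_mul m)).sub
    (continuous_const.mul (cont_exp_mul_neg m)))

lemma classify (L D τ Q κ μ S T : ℝ) (hL : 0 < L) (hD : 0 < D) (hτ : 0 < τ)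
    (hQ : 0 < Q) (hκ : 0 ≤ κ) (hμ : 0 < μ) (hμ2 : D * μ^2 * τ = 1)
    (hS : S * (2*D*μ*((Real.exp (μ*L)+(Real.exp (μ*L))⁻¹)/2) +
        κ*((Real.exp (μ*L)-(Real.exp (μ*L))⁻¹)/2)) =
      -(Q*τ)*(2*D*μ + κ*((Real.exp (μ*L)-(Real.exp (μ*L))⁻¹)/2)))
    (hT : T * (2*D*μ) = κ*(Q*τ + S))
    (e : ℝ → ℝ) (he : IsSteadyExcitonSol L D τ Q κ e) :
    (∀ x ∈ Set.Ioo 0 L, e x = Q*τ + (S+T)/2 * Real.exp (μ*x) + (S-T)/2 * Real.exp (-(μ*x))) ∧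
    (∀ x ∈ Set.Ioo (-L) 0, e x = Q*τ + (S-T)/2 * Real.exp (μ*x) + (S+T)/2 * Real.exp (-(μ*x))) ∧
    e 0 = Q*τ + S := by
  obtain ⟨hcont, heml, hel, hode, dp, dm, hdp, hdm, hflux⟩ := he
  -- normalized ODE
  have hnorm : ∀ x ∈ Set.Ioo (-L) 0 ∪ Set.Ioo 0 L,
      DifferentiableAt ℝ e x ∧ DifferentiableAt ℝ (deriv e) x ∧
      deriv (deriv e) x = μ^2 * (e x - Q*τ) := by
    intro x hx
    obtain ⟨d1, d2, h3⟩ := hode x hx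
    refine ⟨d1, d2, ?_⟩
    have h6 : e x / τ = Q + D * deriv (deriv e) x := by linarith
    have hex : e x = Q*τ + D * (deriv (deriv e) x) * τ := by
      calc e x = (e x / τ) * τ := by field_simp
      _ = (Q + D * deriv (deriv e) x) * τ := by rw [h6]
      _ = Q*τ + D * (deriv (deriv e) x) * τ := by ring
    linear_combination (-(μ^2))*hex - (deriv (deriv e) x)*hμ2
  obtain ⟨A, B, hAB⟩ := rep_lemma hμ hL
    (fun x hx => hnorm x (Or.inr hx))
  obtain ⟨A', B', hA'B'⟩ := rep_lemma hμ (neg_lt_zero.mpr hL)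
    (fun x hx => hnorm x (Or.inl hx))
  have hE : 1 < Real.exp (μ*L) := Real.one_lt_exp_iff.mpr (by positivity)
  -- limit extraction helper facts
  have hsubR : Set.Ioo (0:ℝ) L ⊆ Set.Icc (-L) L := fun z hz => ⟨by linarith [hz.1], le_of_lt hz.2⟩
  have hsubL : Set.Ioo (-L) (0:ℝ) ⊆ Set.Icc (-L) L := fun z hz => ⟨le_of_lt hz.1, by linarith [hz.2]⟩
  have hcR := cont_g (Q*τ) A B μ
  have hcL := cont_g (Q*τ) A' B' μ
  have hcR' := cont_g' A B μ
  have hcL' := cont_g' A' B' μ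
  -- limit at L from inside (0,L)
  have eq1 : Q*τ + A*Real.exp (μ*L) + B*Real.exp (-(μ*L)) = e L := by
    haveI : (nhdsWithin L (Set.Ioo (0:ℝ) L)).NeBot := mem_closure_iff_nhdsWithin_neBot.mp
      (by rw [closure_Ioo (ne_of_lt hL)]; exact ⟨le_of_lt hL, le_refl L⟩)
    refine tendsto_nhds_unique (f := e) (l := nhdsWithin L (Set.Ioo (0:ℝ) L)) ?_ ?_
    · exact ((hcR.tendsto L).mono_left nhdsWithin_le_nhds).congr'
        (eventually_of_mem self_mem_nhdsWithin (fun y hy => ((hAB y hy).1).symm))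
    · exact (hcont L ⟨by linarith, le_refl L⟩).mono_left (nhdsWithin_mono L hsubR)
  -- limit at 0 from inside (0,L)
  have eq2 : Q*τ + A*Real.exp (μ*0) + B*Real.exp (-(μ*0)) = e 0 := by
    haveI : (nhdsWithin (0:ℝ) (Set.Ioo (0:ℝ) L)).NeBot := mem_closure_iff_nhdsWithin_neBot.mp
      (by rw [closure_Ioo (ne_of_lt hL)]; exact ⟨le_refl (0:ℝ), le_of_lt hL⟩)
    refine tendsto_nhds_unique (f := e) (l := nhdsWithin (0:ℝ) (Set.Ioo (0:ℝ) L)) ?_ ?_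
    · exact ((hcR.tendsto 0).mono_left nhdsWithin_le_nhds).congr'
        (eventually_of_mem self_mem_nhdsWithin (fun y hy => ((hAB y hy).1).symm))
    · exact (hcont 0 ⟨by linarith, le_of_lt hL⟩).mono_left (nhdsWithin_mono 0 hsubR)
  -- limit at -L from inside (-L,0)
  have eq3 : Q*τ + A'*Real.exp (μ*(-L)) + B'*Real.exp (-(μ*(-L))) = e (-L) := by
    haveI : (nhdsWithin (-L) (Set.Ioo (-L) (0:ℝ))).NeBot := mem_closure_iff_nhdsWithin_neBot.mp
      (by rw [closure_Ioo (by linarith : -L ≠ (0:ℝ))]; exact ⟨le_refl (-L), by linarith⟩)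
    refine tendsto_nhds_unique (f := e) (l := nhdsWithin (-L) (Set.Ioo (-L) (0:ℝ))) ?_ ?_
    · exact ((hcL.tendsto (-L)).mono_left nhdsWithin_le_nhds).congr'
        (eventually_of_mem self_mem_nhdsWithin (fun y hy => ((hA'B' y hy).1).symm))
    · exact (hcont (-L) ⟨le_refl (-L), by linarith⟩).mono_left (nhdsWithin_mono (-L) hsubL)
  -- limit at 0 from inside (-L,0)
  have eq4 : Q*τ + A'*Real.exp (μ*0) + B'*Real.exp (-(μ*0)) = e 0 := by
    haveI : (nhdsWithin (0:ℝ) (Set.Ioo (-L) (0:ℝ))).NeBot := mem_closure_iff_nhdsWithin_neBot.mp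
      (by rw [closure_Ioo (by linarith : -L ≠ (0:ℝ))]; exact ⟨by linarith, le_refl (0:ℝ)⟩)
    refine tendsto_nhds_unique (f := e) (l := nhdsWithin (0:ℝ) (Set.Ioo (-L) (0:ℝ))) ?_ ?_
    · exact ((hcL.tendsto 0).mono_left nhdsWithin_le_nhds).congr'
        (eventually_of_mem self_mem_nhdsWithin (fun y hy => ((hA'B' y hy).1).symm))
    · exact (hcont 0 ⟨by linarith, le_of_lt hL⟩).mono_left (nhdsWithin_mono 0 hsubL)
  -- one-sided derivative limits
  have eq5 : μ*(A*Real.exp (μ*0) - B*Real.exp (-(μ*0))) = dp := by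
    refine tendsto_nhds_unique ?_ hdp
    refine ((hcR'.tendsto 0).mono_left nhdsWithin_le_nhds).congr'
      (eventually_of_mem (Ioo_mem_nhdsGT_of_mem ⟨le_refl (0:ℝ), hL⟩)
        (fun y hy => ((hAB y hy).2).symm))
  have eq6 : μ*(A'*Real.exp (μ*0) - B'*Real.exp (-(μ*0))) = dm := by
    refine tendsto_nhds_unique ?_ hdm
    refine ((hcL'.tendsto 0).mono_left nhdsWithin_le_nhds).congr'
      (eventually_of_mem (Ioo_mem_nhdsLT_of_mem ⟨neg_lt_zero.mpr hL, le_refl (0:ℝ)⟩)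
        (fun y hy => ((hA'B' y hy).2).symm))
  -- clean up exp(0)
  simp only [mul_zero, neg_zero, Real.exp_zero, mul_one] at eq2 eq4 eq5 eq6
  -- solve the linear system
  have hqpos : 0 < Q*τ := by positivity
  obtain ⟨hA, hB, hA', hB'⟩ := solve_system D κ (Q*τ) (Real.exp (μ*L)) μ A B A' B' S T
    hD hμ hκ hqpos hE hS hT
    (by rw [← Real.exp_neg]; linarith [eq1, hel])
    (by
      rw [← Real.exp_neg]
      have h := eq3
      rw [show μ*(-L) = -(μ*L) by ring, neg_neg] at h
      linarith [h, heml])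
    (by linarith [eq2, eq4])
    (by linear_combination hflux - D*eq5 + D*eq6 + κ*eq2)
  refine ⟨?_, ?_, by linarith [eq2]⟩
  · intro x hx; rw [(hAB x hx).1, hA, hB]
  · intro x hx; rw [(hA'B' x hx).1, hA', hB']

lemma bval (D κ q μ El S T : ℝ) (hD : 0 < D) (hμ : 0 < μ)
    (hS : S*(2*D*μ*((El+El⁻¹)/2) + κ*((El-El⁻¹)/2)) = -q*(2*D*μ + κ*((El-El⁻¹)/2)))
    (hT : T*(2*D*μ) = κ*(q+S)) :
    q + (S+T)/2*El + (S-T)/2*El⁻¹ = 0 := by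
  have h2 : (2*D*μ) ≠ 0 := by positivity
  have key : (2*D*μ) * (q + (S+T)/2*El + (S-T)/2*El⁻¹) = 0 := by
    linear_combination hS + ((El-El⁻¹)/2)*hT
  rcases mul_eq_zero.mp key with h | h
  · exact absurd h h2
  · exact h

lemma existence (L D τ Q κ μ S T : ℝ) (hL : 0 < L) (hD : 0 < D) (hτ : 0 < τ)
    (hQ : 0 < Q) (hκ : 0 ≤ κ) (hμ : 0 < μ) (hμ2 : D * μ^2 * τ = 1)
    (hS : S * (2*D*μ*((Real.exp (μ*L)+(Real.exp (μ*L))⁻¹)/2) +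
        κ*((Real.exp (μ*L)-(Real.exp (μ*L))⁻¹)/2)) =
      -(Q*τ)*(2*D*μ + κ*((Real.exp (μ*L)-(Real.exp (μ*L))⁻¹)/2)))
    (hT : T * (2*D*μ) = κ*(Q*τ + S)) :
    IsSteadyExcitonSol L D τ Q κ
      (fun x => Q*τ + (S+T)/2 * Real.exp (μ*|x|) + (S-T)/2 * Real.exp (-(μ*|x|))) := by
  set e : ℝ → ℝ := fun x => Q*τ + (S+T)/2 * Real.exp (μ*|x|) + (S-T)/2 * Real.exp (-(μ*|x|))
    with he_def
  have hbL : Q*τ + (S+T)/2 * Real.exp (μ*L) + (S-T)/2 * Real.exp (-(μ*L)) = 0 := by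
    rw [Real.exp_neg]
    exact bval D κ (Q*τ) μ (Real.exp (μ*L)) S T hD hμ hS hT
  -- deriv on the right
  have hevR : ∀ x : ℝ, 0 < x → e =ᶠ[nhds x]
      (fun y => Q*τ + (S+T)/2 * Real.exp (μ*y) + (S-T)/2 * Real.exp (-(μ*y))) := by
    intro x hx
    exact eventually_of_mem (isOpen_Ioi.mem_nhds hx)
      (fun y hy => by simp only [he_def, abs_of_pos (Set.mem_Ioi.mp hy)])
  have hevL : ∀ x : ℝ, x < 0 → e =ᶠ[nhds x]
      (fun y => Q*τ + (S-T)/2 * Real.exp (μ*y) + (S+T)/2 * Real.exp (-(μ*y))) := by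
    intro x hx
    refine eventually_of_mem (isOpen_Iio.mem_nhds hx) (fun y hy => ?_)
    simp only [he_def, abs_of_neg (Set.mem_Iio.mp hy)]
    rw [show μ*(-y) = -(μ*y) by ring, neg_neg]
    ring
  have hdR : ∀ x : ℝ, 0 < x → deriv e x =
      μ*((S+T)/2 * Real.exp (μ*x) - (S-T)/2 * Real.exp (-(μ*x))) := by
    intro x hx
    rw [Filter.EventuallyEq.deriv_eq (hevR x hx)]
    exact (hasDerivAt_g (Q*τ) ((S+T)/2) ((S-T)/2) μ x).deriv
  have hdL : ∀ x : ℝ, x < 0 → deriv e x =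
      μ*((S-T)/2 * Real.exp (μ*x) - (S+T)/2 * Real.exp (-(μ*x))) := by
    intro x hx
    rw [Filter.EventuallyEq.deriv_eq (hevL x hx)]
    exact (hasDerivAt_g (Q*τ) ((S-T)/2) ((S+T)/2) μ x).deriv
  have hτne : τ ≠ 0 := ne_of_gt hτ
  refine ⟨?_, ?_, ?_, ?_, μ*((S+T)/2 - (S-T)/2), μ*((S-T)/2 - (S+T)/2), ?_, ?_, ?_⟩
  · -- continuity
    exact ((cont_g (Q*τ) ((S+T)/2) ((S-T)/2) μ).comp continuous_abs).continuousOn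
  · -- e (-L) = 0
    simp only [he_def, abs_neg, abs_of_pos hL]; exact hbL
  · simp only [he_def, abs_of_pos hL]; exact hbL
  · -- ODE
    rintro x (hx | hx)
    · -- left interval
      have hev := hevL x hx.2
      have hev' : deriv e =ᶠ[nhds x]
          (fun y => μ*((S-T)/2 * Real.exp (μ*y) - (S+T)/2 * Real.exp (-(μ*y)))) :=
        eventually_of_mem (isOpen_Iio.mem_nhds hx.2)
          (fun y hy => hdL y (Set.mem_Iio.mp hy))
      refine ⟨(Filter.EventuallyEq.differentiableAt_iff hev).mpr
          (hasDerivAt_g (Q*τ) ((S-T)/2) ((S+T)/2) μ x).differentiableAt,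
        (Filter.EventuallyEq.differentiableAt_iff hev').mpr
          (hasDerivAt_g' ((S-T)/2) ((S+T)/2) μ x).differentiableAt, ?_⟩
      have hdd : deriv (deriv e) x =
          μ^2*((S-T)/2 * Real.exp (μ*x) + (S+T)/2 * Real.exp (-(μ*x))) := by
        rw [Filter.EventuallyEq.deriv_eq hev']
        exact (hasDerivAt_g' ((S-T)/2) ((S+T)/2) μ x).deriv
      have hex : e x = Q*τ + (S-T)/2 * Real.exp (μ*x) + (S+T)/2 * Real.exp (-(μ*x)) := by
        simp only [he_def, abs_of_neg hx.2]
        rw [show μ*(-x) = -(μ*x) by ring, neg_neg]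
        ring
      rw [hdd, hex]
      field_simp
      linear_combination (-(S*Real.exp (μ*x) + S*Real.exp (-(μ*x)) - T*Real.exp (μ*x) + T*Real.exp (-(μ*x))))*hμ2
    · have hev := hevR x hx.1
      have hev' : deriv e =ᶠ[nhds x]
          (fun y => μ*((S+T)/2 * Real.exp (μ*y) - (S-T)/2 * Real.exp (-(μ*y)))) :=
        eventually_of_mem (isOpen_Ioi.mem_nhds hx.1)
          (fun y hy => hdR y (Set.mem_Ioi.mp hy))
      refine ⟨(Filter.EventuallyEq.differentiableAt_iff hev).mpr
          (hasDerivAt_g (Q*τ) ((S+T)/2) ((S-T)/2) μ x).differentiableAt,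
        (Filter.EventuallyEq.differentiableAt_iff hev').mpr
          (hasDerivAt_g' ((S+T)/2) ((S-T)/2) μ x).differentiableAt, ?_⟩
      have hdd : deriv (deriv e) x =
          μ^2*((S+T)/2 * Real.exp (μ*x) + (S-T)/2 * Real.exp (-(μ*x))) := by
        rw [Filter.EventuallyEq.deriv_eq hev']
        exact (hasDerivAt_g' ((S+T)/2) ((S-T)/2) μ x).deriv
      have hex : e x = Q*τ + (S+T)/2 * Real.exp (μ*x) + (S-T)/2 * Real.exp (-(μ*x)) := by
        simp only [he_def, abs_of_pos hx.1]
      rw [hdd, hex]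
      field_simp
      linear_combination (-(S*Real.exp (μ*x) + S*Real.exp (-(μ*x)) + T*Real.exp (μ*x) - T*Real.exp (-(μ*x))))*hμ2
  · -- right derivative limit
    have hval : μ*((S+T)/2*Real.exp (μ*0) - (S-T)/2*Real.exp (-(μ*0))) =
        μ*((S+T)/2 - (S-T)/2) := by norm_num
    refine (hval ▸ ((cont_g' ((S+T)/2) ((S-T)/2) μ).tendsto 0).mono_left
      nhdsWithin_le_nhds).congr'
      (eventually_of_mem self_mem_nhdsWithin (fun y hy => (hdR y (Set.mem_Ioi.mp hy)).symm))
  · have hval : μ*((S-T)/2*Real.exp (μ*0) - (S+T)/2*Real.exp (-(μ*0))) =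
        μ*((S-T)/2 - (S+T)/2) := by norm_num
    refine (hval ▸ ((cont_g' ((S-T)/2) ((S+T)/2) μ).tendsto 0).mono_left
      nhdsWithin_le_nhds).congr'
      (eventually_of_mem self_mem_nhdsWithin (fun y hy => (hdL y (Set.mem_Iio.mp hy)).symm))
  · -- flux jump
    have he0 : e 0 = Q*τ + S := by
      simp only [he_def, abs_zero, mul_zero, neg_zero, Real.exp_zero, mul_one]; ring
    rw [he0]
    linear_combination -hT

theorem steady_exciton_interface_problem
    (L D τ Q κ : ℝ) (hL : 0 < L) (hD : 0 < D) (hτ : 0 < τ) (hQ : 0 < Q)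
    (hκ : 0 ≤ κ) :
    -- existence
    (∃ e : ℝ → ℝ, IsSteadyExcitonSol L D τ Q κ e) ∧
    -- uniqueness (on the physical domain)
    (∀ e₁ e₂ : ℝ → ℝ, IsSteadyExcitonSol L D τ Q κ e₁ →
      IsSteadyExcitonSol L D τ Q κ e₂ →
      Set.EqOn e₁ e₂ (Set.Icc (-L) L)) ∧
    -- evenness and the bounds 0 ≤ e ≤ Qτ
    (∀ e : ℝ → ℝ, IsSteadyExcitonSol L D τ Q κ e →
      (∀ x ∈ Set.Icc (-L) L, e (-x) = e x) ∧
      (∀ x ∈ Set.Icc (-L) L, 0 ≤ e x ∧ e x ≤ Q * τ)) := by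
  obtain ⟨μ, hμ, hμ2⟩ : ∃ μ : ℝ, 0 < μ ∧ D*μ^2*τ = 1 := by
    refine ⟨(Real.sqrt (D*τ))⁻¹, by positivity, ?_⟩
    have hsq : Real.sqrt (D*τ) ^ 2 = D*τ := Real.sq_sqrt (by positivity)
    rw [inv_pow, hsq]
    field_simp
  have hE : 1 < Real.exp (μ*L) := Real.one_lt_exp_iff.mpr (by positivity)
  obtain ⟨S, T, hS, hT, hS1, hS2⟩ := Sbounds D κ (Q*τ) μ (Real.exp (μ*L)) hD hμ hκ
    (by positivity) hE
  have hmain := classify L D τ Q κ μ S T hL hD hτ hQ hκ hμ hμ2 hS hT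
  refine ⟨⟨_, existence L D τ Q κ μ S T hL hD hτ hQ hκ hμ hμ2 hS hT⟩, ?_, ?_⟩
  · -- uniqueness
    intro e₁ e₂ h1 h2 x hx
    obtain ⟨hR1, hL1, h01⟩ := hmain e₁ h1
    obtain ⟨hR2, hL2, h02⟩ := hmain e₂ h2
    rcases lt_trichotomy x 0 with hx0 | hx0 | hx0
    · rcases eq_or_lt_of_le hx.1 with hxL | hxL
      · show e₁ x = e₂ x
        rw [← hxL, h1.2.1, h2.2.1]
      · show e₁ x = e₂ x
        rw [hL1 x ⟨hxL, hx0⟩, hL2 x ⟨hxL, hx0⟩]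
    · show e₁ x = e₂ x
      rw [hx0, h01, h02]
    · rcases eq_or_lt_of_le hx.2 with hxL | hxL
      · show e₁ x = e₂ x
        rw [hxL, h1.2.2.1, h2.2.2.1]
      · show e₁ x = e₂ x
        rw [hR1 x ⟨hx0, hxL⟩, hR2 x ⟨hx0, hxL⟩]
  · -- evenness and bounds
    intro e he
    obtain ⟨hR, hLf, h0⟩ := hmain e he
    have heml : e (-L) = 0 := he.2.1
    have hel : e L = 0 := he.2.2.1
    have heven : ∀ x ∈ Set.Icc (-L) L, e (-x) = e x := by
      intro x hx
      rcases lt_trichotomy x 0 with hx0 | hx0 | hx0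
      · rcases eq_or_lt_of_le hx.1 with hxL | hxL
        · rw [← hxL, neg_neg, hel, heml]
        · rw [hR (-x) ⟨by linarith, by linarith⟩, hLf x ⟨hxL, hx0⟩,
            show μ*(-x) = -(μ*x) by ring, neg_neg]
          ring
      · rw [hx0, neg_zero]
      · rcases eq_or_lt_of_le hx.2 with hxL | hxL
        · rw [hxL, heml, hel]
        · rw [hLf (-x) ⟨by linarith, by linarith⟩, hR x ⟨hx0, hxL⟩,
            show μ*(-x) = -(μ*x) by ring, neg_neg]
          ring
    refine ⟨heven, ?_⟩
    have hbd : Q*τ + (S+T)/2*Real.exp (μ*L) + (S-T)/2*Real.exp (-(μ*L)) = 0 := by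
      rw [Real.exp_neg]
      exact bval D κ (Q*τ) μ (Real.exp (μ*L)) S T hD hμ hS hT
    have key : ∀ y, 0 ≤ y → y ≤ L → 0 ≤ e y ∧ e y ≤ Q*τ := by
      intro y h0y h1y
      rcases eq_or_lt_of_le h0y with h | h
      · rw [← h, h0]
        constructor <;> linarith
      · rcases eq_or_lt_of_le h1y with h' | h'
        · rw [h', hel]
          exact ⟨le_refl 0, by positivity⟩
        · have hb := bound_aux ((S+T)/2) ((S-T)/2) μ (Q*τ) L S hμ hL (by positivity)
            (by ring) hS1 hS2 hbd y h0y h1y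
          rw [hR y ⟨h, h'⟩]
          constructor <;> linarith [hb.1, hb.2]
    intro x hx
    rcases le_or_gt 0 x with hx0 | hx0
    · exact key x hx0 hx.2
    · rw [← heven x hx]
      exact key (-x) (by linarith) (by linarith [hx.1])
end

section
/- Maximum principle bound for the bulk exciton equation: if e solves ∂e/∂t − D Δe = Q − e/τ on Ω × (0,T) with e = 0 on the contact boundary, zero initial data, and Q constant with 0 ≤ Q, and if the interface exchange term only removes excitons (flux jump condition [−Dν·∇e] = −κ e on Γ with κ ≥ 0), then 0 ≤ e(x,t) ≤ Qτ(1 − e^{−t/τ}) ≤ Qτ for all (x,t). State and prove the one-dimensional version. -/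
open Real Filter Set Topology

/-- If `g` has derivative `g'` at `t₀ > 0` and `t₀` maximizes `g` on `[0, t₀]`,
then `g' ≥ 0`. -/
lemma aux_time {g : ℝ → ℝ} {g' t₀ : ℝ} (ht : 0 < t₀)
    (h : HasDerivAt g g' t₀) (hmax : ∀ s ∈ Set.Icc (0:ℝ) t₀, g s ≤ g t₀) : 0 ≤ g' := by
  have hs : Tendsto (slope g t₀) (𝓝[<] t₀) (𝓝 g') :=
    (hasDerivAt_iff_tendsto_slope.mp h).mono_left
      (nhdsWithin_mono _ (fun y hy => (ne_of_lt hy : y ≠ t₀)))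
  refine ge_of_tendsto hs ?_
  filter_upwards [self_mem_nhdsWithin,
    eventually_nhdsWithin_of_eventually_nhds (eventually_gt_nhds ht)] with s hs1 hs2
  rw [slope_def_field]
  rw [div_nonneg_iff]
  right
  constructor
  · have := hmax s ⟨le_of_lt hs2, le_of_lt hs1⟩
    linarith
  · have : s < t₀ := hs1
    linarith

/-- Second derivative test at an interior maximum. -/
lemma aux_second {f : ℝ → ℝ} {x₀ a b : ℝ} (hx : x₀ ∈ Set.Ioo a b)
    (hd : ∀ x ∈ Set.Ioo a b, DifferentiableAt ℝ f x)
    (hd2 : DifferentiableAt ℝ (deriv f) x₀)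
    (hmax : ∀ x ∈ Set.Ioo a b, f x ≤ f x₀) :
    deriv (deriv f) x₀ ≤ 0 := by
  have hnhds : Set.Ioo a b ∈ 𝓝 x₀ := isOpen_Ioo.mem_nhds hx
  have hloc : IsLocalMax f x₀ := by
    filter_upwards [hnhds] with y hy using hmax y hy
  have h0 : deriv f x₀ = 0 := hloc.deriv_eq_zero
  by_contra hcon
  push_neg at hcon
  have hslope : Tendsto (slope (deriv f) x₀) (𝓝[≠] x₀) (𝓝 (deriv (deriv f) x₀)) :=
    hasDerivAt_iff_tendsto_slope.mp hd2.hasDerivAt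
  have hev1 : ∀ᶠ z in 𝓝[>] x₀, 0 < slope (deriv f) x₀ z :=
    (hslope.eventually (eventually_gt_nhds hcon)).filter_mono
      (nhdsWithin_mono _ fun y hy => (ne_of_gt hy : y ≠ x₀))
  have hev2 : ∀ᶠ z in 𝓝[>] x₀, z ∈ Set.Ioo a b :=
    eventually_nhdsWithin_of_eventually_nhds hnhds
  obtain ⟨u, hu, hsub⟩ := mem_nhdsGT_iff_exists_Ioo_subset.mp (hev1.and hev2)
  have hu' : x₀ < u := hu
  set y := (x₀ + u) / 2 with hy
  have hy1 : x₀ < y := by rw [hy]; linarith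
  have hy2 : y < u := by rw [hy]; linarith
  have hyP := hsub ⟨hy1, hy2⟩
  have hIcc : Set.Icc x₀ y ⊆ Set.Ioo a b := fun z hz =>
    ⟨lt_of_lt_of_le hx.1 hz.1, lt_of_le_of_lt hz.2 hyP.2.2⟩
  have hcont' : ContinuousOn f (Set.Icc x₀ y) := fun z hz =>
    ((hd z (hIcc hz)).continuousAt).continuousWithinAt
  have hdiff' : DifferentiableOn ℝ f (Set.Ioo x₀ y) := fun z hz =>
    (hd z (hIcc ⟨le_of_lt hz.1, le_of_lt hz.2⟩)).differentiableWithinAt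
  obtain ⟨c, hc, hceq⟩ := exists_deriv_eq_slope f hy1 hcont' hdiff'
  have hcP := hsub ⟨hc.1, lt_trans hc.2 hy2⟩
  have h1 : 0 < slope (deriv f) x₀ c := hcP.1
  rw [slope_def_field, h0, sub_zero] at h1
  have hc0 : 0 < c - x₀ := by linarith [hc.1]
  have h2 : 0 < deriv f c := by
    rcases div_pos_iff.mp h1 with ⟨h, _⟩ | ⟨_, h⟩
    · exact h
    · linarith
  have h3 : f y ≤ f x₀ := hmax y hyP.2
  rw [hceq] at h2
  have h4 : 0 < y - x₀ := by linarith
  have := div_nonpos_of_nonpos_of_nonneg (by linarith : f y - f x₀ ≤ 0) (le_of_lt h4)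
  linarith

/-- Tilted second derivative test: if `x ↦ f x + c x` has a max at `x₀` over `(a,b)`,
then `f'' x₀ ≤ 0`. -/
lemma aux_tilt {f : ℝ → ℝ} {c x₀ a b : ℝ} (hx : x₀ ∈ Set.Ioo a b)
    (hd : ∀ x ∈ Set.Ioo a b, DifferentiableAt ℝ f x)
    (hd2 : DifferentiableAt ℝ (deriv f) x₀)
    (hmax : ∀ x ∈ Set.Ioo a b, f x + c * x ≤ f x₀ + c * x₀) :
    deriv (deriv f) x₀ ≤ 0 := by
  set g : ℝ → ℝ := fun x => f x + c * x with hg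
  have hlin : ∀ x : ℝ, HasDerivAt (fun y : ℝ => c * y) c x := fun x => by
    simpa using (hasDerivAt_id x).const_mul c
  have hgd : ∀ x ∈ Set.Ioo a b, DifferentiableAt ℝ g x := fun x hx' =>
    (hd x hx').add (hlin x).differentiableAt
  have heq : deriv g =ᶠ[𝓝 x₀] fun x => deriv f x + c := by
    filter_upwards [isOpen_Ioo.mem_nhds hx] with z hz
    exact (((hd z hz).hasDerivAt).add (hlin z)).deriv
  have hgd2 : DifferentiableAt ℝ (deriv g) x₀ :=
    (heq.differentiableAt_iff).mpr (hd2.add_const c)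
  have key : deriv (deriv g) x₀ ≤ 0 := aux_second hx hgd hgd2 (fun x hx' => hmax x hx')
  rwa [heq.deriv_eq, deriv_add_const] at key

/-- One-sided Hopf-type lemma on the right. -/
lemma aux_hopf_right {f : ℝ → ℝ} {r d ε : ℝ} (hr : 0 < r) (hε : 0 < ε)
    (hc : ContinuousOn f (Set.Icc 0 r))
    (hd : ∀ x ∈ Set.Ioo (0:ℝ) r, DifferentiableAt ℝ f x)
    (hlim : Tendsto (deriv f) (𝓝[>] (0:ℝ)) (𝓝 d))
    (hmax : ∀ x ∈ Set.Ioo (0:ℝ) r, f x + ε * x ≤ f 0) : d ≤ -ε := by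
  by_contra hcon
  push_neg at hcon
  set m := (d - ε) / 2 with hm
  have hm1 : -ε < m := by rw [hm]; linarith
  have hm2 : m < d := by rw [hm]; linarith
  have hev : ∀ᶠ z in 𝓝[>] (0:ℝ), m < deriv f z ∧ z ∈ Set.Ioo (0:ℝ) r := by
    refine (hlim.eventually (eventually_gt_nhds hm2)).and ?_
    rw [eventually_iff_exists_mem]
    exact ⟨Set.Ioo 0 r, Ioo_mem_nhdsGT_of_mem ⟨le_refl _, hr⟩, fun y hy => hy⟩
  obtain ⟨u, hu, hsub⟩ := mem_nhdsGT_iff_exists_Ioo_subset.mp hev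
  have hu' : (0:ℝ) < u := hu
  set x := min u r / 2 with hxdef
  have hx0 : 0 < x := by rw [hxdef]; positivity
  have hxu : x < u := by
    rw [hxdef]; have := min_le_left u r; have := lt_min hu' hr; linarith [min_le_left u r]
  have hxr : x < r := by
    rw [hxdef]; have := min_le_right u r; have := lt_min hu' hr; linarith [min_le_right u r]
  have key : ∀ y ∈ Set.Ioo (0:ℝ) x, m * (x - y) ≤ f x - f y := by
    intro y hy
    have hyx : y < x := hy.2
    have hconty : ContinuousOn f (Set.Icc y x) := hc.mono (fun z hz =>
      ⟨le_trans (le_of_lt hy.1) hz.1, le_trans hz.2 (le_of_lt hxr)⟩)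
    have hdiffy : DifferentiableOn ℝ f (Set.Ioo y x) := fun z hz =>
      (hd z ⟨lt_trans hy.1 hz.1, lt_trans hz.2 hxr⟩).differentiableWithinAt
    obtain ⟨c', hc', hceq⟩ := exists_deriv_eq_slope f hyx hconty hdiffy
    have hc'mem : c' ∈ Set.Ioo (0:ℝ) u := ⟨lt_trans hy.1 hc'.1, lt_trans hc'.2 hxu⟩
    have := (hsub hc'mem).1
    rw [hceq] at this
    have hxy : 0 < x - y := by linarith
    have := (lt_div_iff₀ hxy).mp this
    linarith
  have hne : (𝓝[Set.Ioo (0:ℝ) x] (0:ℝ)).NeBot := by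
    apply mem_closure_iff_nhdsWithin_neBot.mp
    rw [closure_Ioo (ne_of_lt hx0)]
    exact ⟨le_refl _, le_of_lt hx0⟩
  have hf0 : Tendsto f (𝓝[Set.Ioo (0:ℝ) x] (0:ℝ)) (𝓝 (f 0)) :=
    (hc.continuousWithinAt ⟨le_refl _, le_of_lt hr⟩).mono_left
      (nhdsWithin_mono _ (fun z hz => ⟨le_of_lt hz.1, le_trans (le_of_lt hz.2) (le_of_lt hxr)⟩))
  have hid : Tendsto (fun y : ℝ => y) (𝓝[Set.Ioo (0:ℝ) x] (0:ℝ)) (𝓝 0) :=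
    tendsto_id.mono_left nhdsWithin_le_nhds
  have htend : Tendsto (fun y => f x - f y - m * (x - y)) (𝓝[Set.Ioo (0:ℝ) x] (0:ℝ))
      (𝓝 (f x - f 0 - m * (x - 0))) :=
    (tendsto_const_nhds.sub hf0).sub ((tendsto_const_nhds.sub hid).const_mul m)
  have hge : 0 ≤ f x - f 0 - m * (x - 0) := by
    refine ge_of_tendsto htend ?_
    filter_upwards [self_mem_nhdsWithin] with y hy
    linarith [key y hy]
  have hx' := hmax x ⟨hx0, hxr⟩
  nlinarith [mul_pos (show (0:ℝ) < m + ε by linarith) hx0]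

/-- One-sided Hopf-type lemma on the left. -/
lemma aux_hopf_left {f : ℝ → ℝ} {r d ε : ℝ} (hr : 0 < r) (hε : 0 < ε)
    (hc : ContinuousOn f (Set.Icc (-r) 0))
    (hd : ∀ x ∈ Set.Ioo (-r) (0:ℝ), DifferentiableAt ℝ f x)
    (hlim : Tendsto (deriv f) (𝓝[<] (0:ℝ)) (𝓝 d))
    (hmax : ∀ x ∈ Set.Ioo (-r) (0:ℝ), f x - ε * x ≤ f 0) : ε ≤ d := by
  by_contra hcon
  push_neg at hcon
  set m := (d + ε) / 2 with hm
  have hm1 : d < m := by rw [hm]; linarith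
  have hm2 : m < ε := by rw [hm]; linarith
  have hev : ∀ᶠ z in 𝓝[<] (0:ℝ), deriv f z < m ∧ z ∈ Set.Ioo (-r) (0:ℝ) := by
    refine (hlim.eventually (eventually_lt_nhds hm1)).and ?_
    rw [eventually_iff_exists_mem]
    exact ⟨Set.Ioo (-r) 0, Ioo_mem_nhdsLT_of_mem ⟨by linarith, le_refl _⟩, fun y hy => hy⟩
  obtain ⟨l, hl, hsub⟩ := mem_nhdsLT_iff_exists_Ioo_subset.mp hev
  have hl' : l < 0 := hl
  set x := max l (-r) / 2 with hxdef
  have hx0 : x < 0 := by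
    rw [hxdef]
    have : max l (-r) < 0 := max_lt hl' (by linarith)
    linarith
  have hxl : l < x := by
    rw [hxdef]; have h1 := le_max_left l (-r); have : max l (-r) < 0 := max_lt hl' (by linarith); linarith
  have hxr : -r < x := by
    rw [hxdef]; have h1 := le_max_right l (-r); have : max l (-r) < 0 := max_lt hl' (by linarith); linarith
  have key : ∀ y ∈ Set.Ioo x (0:ℝ), f y - f x ≤ m * (y - x) := by
    intro y hy
    have hxy : x < y := hy.1
    have hconty : ContinuousOn f (Set.Icc x y) := hc.mono (fun z hz =>
      ⟨le_trans (le_of_lt hxr) hz.1, le_trans hz.2 (le_of_lt hy.2)⟩)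
    have hdiffy : DifferentiableOn ℝ f (Set.Ioo x y) := fun z hz =>
      (hd z ⟨lt_trans hxr hz.1, lt_trans hz.2 hy.2⟩).differentiableWithinAt
    obtain ⟨c', hc', hceq⟩ := exists_deriv_eq_slope f hxy hconty hdiffy
    have hc'mem : c' ∈ Set.Ioo l (0:ℝ) := ⟨lt_trans hxl hc'.1, lt_trans hc'.2 hy.2⟩
    have := (hsub hc'mem).1
    rw [hceq] at this
    have hyx : 0 < y - x := by linarith
    have := (div_lt_iff₀ hyx).mp this
    linarith
  have hne : (𝓝[Set.Ioo x (0:ℝ)] (0:ℝ)).NeBot := by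
    apply mem_closure_iff_nhdsWithin_neBot.mp
    rw [closure_Ioo (ne_of_lt hx0)]
    exact ⟨le_of_lt hx0, le_refl _⟩
  have hf0 : Tendsto f (𝓝[Set.Ioo x (0:ℝ)] (0:ℝ)) (𝓝 (f 0)) :=
    (hc.continuousWithinAt ⟨by linarith, le_refl _⟩).mono_left
      (nhdsWithin_mono _ (fun z hz => ⟨le_trans (le_of_lt hxr) (le_of_lt hz.1), le_of_lt hz.2⟩))
  have hid : Tendsto (fun y : ℝ => y) (𝓝[Set.Ioo x (0:ℝ)] (0:ℝ)) (𝓝 0) :=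
    tendsto_id.mono_left nhdsWithin_le_nhds
  have htend : Tendsto (fun y => f y - f x - m * (y - x)) (𝓝[Set.Ioo x (0:ℝ)] (0:ℝ))
      (𝓝 (f 0 - f x - m * (0 - x))) :=
    (hf0.sub tendsto_const_nhds).sub ((hid.sub tendsto_const_nhds).const_mul m)
  have hge : f 0 - f x - m * (0 - x) ≤ 0 := by
    refine le_of_tendsto htend ?_
    filter_upwards [self_mem_nhdsWithin] with y hy
    linarith [key y hy]
  have hx' := hmax x ⟨hxr, hx0⟩
  nlinarith [mul_pos (show (0:ℝ) < ε - m by linarith) (show (0:ℝ) < -x by linarith)]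

theorem parabolic_exciton_maximum_principle_1d
    (L D τ Q κ T : ℝ) (hL : 0 < L) (hD : 0 < D) (hτ : 0 < τ)
    (hQ : 0 ≤ Q) (hκ : 0 ≤ κ) (hT : 0 < T)
    (e : ℝ → ℝ → ℝ)  -- e x t
    -- regularity: continuity on the closed space-time cylinder
    (hcont : ContinuousOn (fun p : ℝ × ℝ => e p.1 p.2)
        (Set.Icc (-L) L ×ˢ Set.Icc 0 T))
    -- boundary conditions at the contacts
    (hbc : ∀ t ∈ Set.Icc (0:ℝ) T, e (-L) t = 0 ∧ e L t = 0)
    -- zero initial datum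
    (hic : ∀ x ∈ Set.Icc (-L) L, e x 0 = 0)
    -- the PDE ∂e/∂t - D ∂²e/∂x² = Q - e/τ in the bulk
    (hpde : ∀ x ∈ Set.Ioo (-L) 0 ∪ Set.Ioo 0 L, ∀ t ∈ Set.Ioc (0:ℝ) T,
        DifferentiableAt ℝ (fun y => e y t) x ∧
        DifferentiableAt ℝ (deriv (fun y => e y t)) x ∧
        HasDerivAt (fun s => e x s)
          (D * deriv (deriv (fun y => e y t)) x + Q - e x t / τ) t)
    -- interface condition: jump of -D e_x across 0 equals -κ e(0,t)
    (hjump : ∀ t ∈ Set.Ioc (0:ℝ) T, ∃ dplus dminus : ℝ,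
        Tendsto (deriv (fun y => e y t)) (nhdsWithin 0 (Set.Ioi 0)) (nhds dplus) ∧
        Tendsto (deriv (fun y => e y t)) (nhdsWithin 0 (Set.Iio 0)) (nhds dminus) ∧
        (-D * dplus) - (-D * dminus) = -κ * e 0 t) :
    ∀ x ∈ Set.Icc (-L) L, ∀ t ∈ Set.Icc (0:ℝ) T,
      0 ≤ e x t ∧ e x t ≤ Q * τ * (1 - Real.exp (-(t / τ))) ∧
      Q * τ * (1 - Real.exp (-(t / τ))) ≤ Q * τ := by
  -- the comparison function M
  set M : ℝ → ℝ := fun s => Q * τ * (1 - Real.exp (-(s / τ))) with hMdef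
  have hτ0 : τ ≠ 0 := ne_of_gt hτ
  have hM0 : M 0 = 0 := by simp [hMdef]
  have hMnonneg : ∀ s : ℝ, 0 ≤ s → 0 ≤ M s := by
    intro s hs
    have h1 : Real.exp (-(s / τ)) ≤ 1 := Real.exp_le_one_iff.mpr (by rw [neg_nonpos]; positivity)
    have := mul_nonneg hQ hτ.le
    rw [hMdef]
    nlinarith
  have hMle : ∀ s : ℝ, M s ≤ Q * τ := by
    intro s
    have h1 : 0 < Real.exp (-(s / τ)) := Real.exp_pos _
    have := mul_nonneg hQ hτ.le
    rw [hMdef]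
    nlinarith
  have hMcont : Continuous M := by
    rw [hMdef]; fun_prop
  have hMderiv : ∀ s : ℝ, HasDerivAt M (Q - M s / τ) s := by
    intro s
    have h1 : HasDerivAt (fun u : ℝ => -(u / τ)) (-(1 / τ)) s := by
      exact ((hasDerivAt_id s).div_const τ).neg
    have h2 : HasDerivAt (fun u : ℝ => Real.exp (-(u / τ)))
        (Real.exp (-(s / τ)) * (-(1 / τ))) s := h1.exp
    have h3 : HasDerivAt M (Q * τ * (0 - Real.exp (-(s / τ)) * (-(1 / τ)))) s :=
      ((hasDerivAt_const s (1:ℝ)).sub h2).const_mul (Q * τ)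
    convert h3 using 1
    rw [hMdef]
    field_simp
    ring
  -- slice continuity
  have hslice : ∀ t' ∈ Set.Icc (0:ℝ) T, ContinuousOn (fun y => e y t') (Set.Icc (-L) L) := by
    intro t' ht'
    have : (fun y => e y t') = (fun p : ℝ × ℝ => e p.1 p.2) ∘ (fun y => (y, t')) := rfl
    rw [this]
    exact hcont.comp ((continuous_id.prodMk continuous_const).continuousOn)
      (fun y hy => ⟨hy, ht'⟩)
  -- the main maximum principle estimate
  have main : ∀ σ c : ℝ, 0 ≤ c → σ ≤ c → ∀ ε : ℝ, 0 < ε →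
      ∀ p ∈ Set.Icc (-L) L ×ˢ Set.Icc (0:ℝ) T,
        σ * e p.1 p.2 - c * M p.2 - ε * p.2 + ε * |p.1| ≤ ε * L := by
    intro σ c hc hσc ε hε
    set v : ℝ × ℝ → ℝ := fun p => σ * e p.1 p.2 - c * M p.2 - ε * p.2 + ε * |p.1| with hv
    set S : Set (ℝ × ℝ) := Set.Icc (-L) L ×ˢ Set.Icc (0:ℝ) T with hSdef
    have hvcont : ContinuousOn v S :=
      (((continuousOn_const.mul hcont).sub
          (continuous_const.mul (hMcont.comp continuous_snd)).continuousOn).sub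
          (continuous_const.mul continuous_snd).continuousOn).add
        (continuous_const.mul continuous_fst.abs).continuousOn
    have hScomp : IsCompact S := isCompact_Icc.prod isCompact_Icc
    have hSne : S.Nonempty := by
      refine ⟨(0, 0), ⟨⟨?_, ?_⟩, le_refl _, hT.le⟩⟩ <;> simp <;> linarith
    obtain ⟨⟨x₀, t₀⟩, hp₀S, hp₀max⟩ := hScomp.exists_isMaxOn hSne hvcont
    have hx₀ : x₀ ∈ Set.Icc (-L) L := hp₀S.1
    have ht₀ : t₀ ∈ Set.Icc (0:ℝ) T := hp₀S.2
    have habs : |x₀| ≤ L := abs_le.mpr ⟨hx₀.1, hx₀.2⟩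
    suffices hKle : v (x₀, t₀) ≤ ε * L by
      intro p hp
      exact le_trans (hp₀max hp) hKle
    by_contra hK
    push_neg at hK
    -- the maximum point is not at t = 0
    have ht₀0 : 0 < t₀ := by
      rcases eq_or_lt_of_le ht₀.1 with h | h
      · exfalso
        have he0 : e x₀ 0 = 0 := hic x₀ hx₀
        have : v (x₀, t₀) = ε * |x₀| := by
          simp only [hv, ← h, he0, hM0]; ring
        rw [this] at hK
        have : ε * |x₀| ≤ ε * L := mul_le_mul_of_nonneg_left habs hε.le
        linarith
      · exact h
    -- the maximum point is not at x = ±L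
    have hx₀L : |x₀| < L := by
      rcases lt_or_eq_of_le habs with h | h
      · exact h
      · exfalso
        have he0 : e x₀ t₀ = 0 := by
          rcases (abs_eq hL.le).mp h with h' | h'
          · rw [h']; exact (hbc t₀ ht₀).2
          · rw [h']; exact (hbc t₀ ht₀).1
        have hv0 : v (x₀, t₀) = -(c * M t₀) - ε * t₀ + ε * L := by
          simp only [hv, he0, h]; ring
        rw [hv0] at hK
        have h1 : 0 ≤ c * M t₀ := mul_nonneg hc (hMnonneg t₀ ht₀.1)
        have h2 : 0 ≤ ε * t₀ := mul_nonneg hε.le ht₀.1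
        linarith
    -- positivity of σ e - c M at the max point
    have hP : 0 < σ * e x₀ t₀ - c * M t₀ := by
      have h1 : ε * |x₀| < ε * L := mul_lt_mul_of_pos_left hx₀L hε
      have h2 : 0 ≤ ε * t₀ := mul_nonneg hε.le ht₀.1
      have h3 : v (x₀, t₀) = σ * e x₀ t₀ - c * M t₀ - ε * t₀ + ε * |x₀| := rfl
      linarith [hK]
    have ht₀T : t₀ ∈ Set.Ioc (0:ℝ) T := ⟨ht₀0, ht₀.2⟩
    by_cases hx0 : x₀ = 0
    · -- maximum at the interface
      subst hx0
      obtain ⟨dp, dm, hdp, hdm, hjmp⟩ := hjump t₀ ht₀T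
      have hσe : 0 < σ * e 0 t₀ := by
        have := mul_nonneg hc (hMnonneg t₀ ht₀.1)
        linarith
      -- derivative of the rescaled slice
      have hderiv_eq : deriv (fun y => σ * e y t₀) = fun y => σ * deriv (fun z => e z t₀) y :=
        funext fun y => deriv_const_mul_field σ
      have hfd : ∀ x' ∈ Set.Ioo (-L) 0 ∪ Set.Ioo 0 L,
          DifferentiableAt ℝ (fun y => σ * e y t₀) x' := fun x' hx' =>
        ((hpde x' hx' t₀ ht₀T).1).const_mul σ
      have hfc : ContinuousOn (fun y => σ * e y t₀) (Set.Icc (-L) L) :=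
        continuousOn_const.mul (hslice t₀ ht₀)
      -- Hopf on the right
      have hright : σ * dp ≤ -ε := by
        refine aux_hopf_right hL hε (hfc.mono (Set.Icc_subset_Icc (by linarith) (le_refl _)))
          (fun x' hx' => hfd x' (Or.inr hx')) ?_ ?_
        · rw [hderiv_eq]; exact hdp.const_mul σ
        · intro x' hx'
          have hmem : (x', t₀) ∈ S := ⟨⟨by linarith [hx'.1], le_of_lt hx'.2⟩, ht₀⟩
          have := hp₀max hmem
          simp only [hv, Set.mem_setOf_eq] at this
          rw [abs_of_pos hx'.1] at this
          simp only [abs_zero] at this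
          linarith
      -- Hopf on the left
      have hleft : ε ≤ σ * dm := by
        refine aux_hopf_left hL hε (hfc.mono (Set.Icc_subset_Icc (le_refl _) hL.le))
          (fun x' hx' => hfd x' (Or.inl hx')) ?_ ?_
        · rw [hderiv_eq]; exact hdm.const_mul σ
        · intro x' hx'
          have hmem : (x', t₀) ∈ S := ⟨⟨le_of_lt hx'.1, by linarith [hx'.2]⟩, ht₀⟩
          have := hp₀max hmem
          simp only [hv, Set.mem_setOf_eq] at this
          rw [abs_of_neg hx'.2] at this
          simp only [abs_zero] at this
          linarith
      -- the jump condition gives σ dp ≥ σ dm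
      have heq : D * (σ * dp) - D * (σ * dm) = κ * (σ * e 0 t₀) := by
        linear_combination (-σ) * hjmp
      have hC : 0 ≤ κ * (σ * e 0 t₀) := mul_nonneg hκ hσe.le
      have hA : D * (σ * dp) ≤ D * (-ε) := mul_le_mul_of_nonneg_left hright hD.le
      have hB : D * ε ≤ D * (σ * dm) := mul_le_mul_of_nonneg_left hleft hD.le
      have hDε : 0 < D * ε := mul_pos hD hε
      nlinarith
    · -- maximum in the bulk
      have hbulk : x₀ ∈ Set.Ioo (-L) 0 ∪ Set.Ioo 0 L := by
        rcases lt_trichotomy x₀ 0 with h | h | h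
        · exact Or.inl ⟨(abs_lt.mp hx₀L).1, h⟩
        · exact absurd h hx0
        · exact Or.inr ⟨h, (abs_lt.mp hx₀L).2⟩
      obtain ⟨hd1, hd2, hd3⟩ := hpde x₀ hbulk t₀ ht₀T
      set exx := deriv (deriv (fun y => e y t₀)) x₀ with hexx
      -- spatial second derivative inequality: σ * exx ≤ 0
      have hderiv_eq : deriv (fun y => σ * e y t₀) = fun y => σ * deriv (fun z => e z t₀) y :=
        funext fun y => deriv_const_mul_field σ
      have hd2' : DifferentiableAt ℝ (deriv (fun y => σ * e y t₀)) x₀ := by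
        rw [hderiv_eq]; exact hd2.const_mul σ
      have hdd : deriv (deriv (fun y => σ * e y t₀)) x₀ = σ * exx := by
        rw [hderiv_eq, hexx]; exact deriv_const_mul_field σ
      have hsp : σ * exx ≤ 0 := by
        rw [← hdd]
        rcases hbulk with h | h
        · -- left interval, |y| = -y, tilt constant -ε
          refine aux_tilt (c := -ε) h (fun x' hx' => ((hpde x' (Or.inl hx') t₀ ht₀T).1).const_mul σ)
            hd2' ?_
          intro x' hx'
          have hmem : (x', t₀) ∈ S := ⟨⟨le_of_lt hx'.1, by linarith [hx'.2]⟩, ht₀⟩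
          have := hp₀max hmem
          simp only [hv, Set.mem_setOf_eq] at this
          rw [abs_of_neg hx'.2, abs_of_neg h.2] at this
          linarith
        · -- right interval, |y| = y, tilt constant ε
          refine aux_tilt (c := ε) h (fun x' hx' => ((hpde x' (Or.inr hx') t₀ ht₀T).1).const_mul σ)
            hd2' ?_
          intro x' hx'
          have hmem : (x', t₀) ∈ S := ⟨⟨by linarith [hx'.1], le_of_lt hx'.2⟩, ht₀⟩
          have := hp₀max hmem
          simp only [hv, Set.mem_setOf_eq] at this
          rw [abs_of_pos hx'.1, abs_of_pos h.1] at this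
          linarith
      -- time derivative inequality
      have hgd : HasDerivAt (fun s => σ * e x₀ s - c * M s - ε * s)
          (σ * (D * exx + Q - e x₀ t₀ / τ) - c * (Q - M t₀ / τ) - ε) t₀ := by
        have h3 : HasDerivAt (fun s : ℝ => ε * s) ε t₀ := by
          simpa using (hasDerivAt_id t₀).const_mul ε
        exact ((hd3.const_mul σ).sub ((hMderiv t₀).const_mul c)).sub h3
      have htime : 0 ≤ σ * (D * exx + Q - e x₀ t₀ / τ) - c * (Q - M t₀ / τ) - ε := by
        refine aux_time ht₀0 hgd ?_
        intro s hs
        have hmem : (x₀, s) ∈ S := ⟨hx₀, ⟨hs.1, le_trans hs.2 ht₀.2⟩⟩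
        have := hp₀max hmem
        simp only [hv, Set.mem_setOf_eq] at this
        linarith
      -- contradiction
      have h4 : D * (σ * exx) ≤ 0 := mul_nonpos_of_nonneg_of_nonpos hD.le hsp
      have h5 : (σ - c) * Q ≤ 0 := mul_nonpos_of_nonpos_of_nonneg (by linarith) hQ
      have h6 : 0 < (σ * e x₀ t₀ - c * M t₀) / τ := div_pos hP hτ
      have hkey : σ * (D * exx + Q - e x₀ t₀ / τ) - c * (Q - M t₀ / τ) - ε
          = D * (σ * exx) + (σ - c) * Q - (σ * e x₀ t₀ - c * M t₀) / τ - ε := by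
        field_simp
        ring
      rw [hkey] at htime
      linarith
  -- conclude
  have hTL : 0 < T + L := by linarith
  intro x hx t ht
  have habs : |x| ≤ L := abs_le.mpr ⟨hx.1, hx.2⟩
  have habs0 : 0 ≤ |x| := abs_nonneg x
  refine ⟨?_, ?_, hMle t⟩
  · -- lower bound
    by_contra h
    push_neg at h
    set ε := -e x t / (2 * (T + L)) with hε
    have hε0 : 0 < ε := by
      rw [hε]; apply div_pos (by linarith) (by linarith)
    have := main (-1) 0 (le_refl _) (by norm_num) ε hε0 (x, t) ⟨hx, ht⟩
    simp only at this
    have h1 : ε * t ≤ ε * T := mul_le_mul_of_nonneg_left ht.2 hε0.le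
    have h2 : 0 ≤ ε * |x| := mul_nonneg hε0.le habs0
    have h3 : -e x t ≤ ε * (T + L) := by nlinarith
    have h4 : ε * (T + L) = -e x t / 2 := by
      rw [hε]; field_simp
    rw [h4] at h3
    linarith
  · -- upper bound
    by_contra h
    push_neg at h
    set ε := (e x t - M t) / (2 * (T + L)) with hε
    have hε0 : 0 < ε := by
      rw [hε]
      have hMt : Q * τ * (1 - Real.exp (-(t / τ))) = M t := rfl
      apply div_pos (by rw [← hMt]; linarith) (by linarith)
    have := main 1 1 (by norm_num) (le_refl _) ε hε0 (x, t) ⟨hx, ht⟩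
    simp only at this
    have h1 : ε * t ≤ ε * T := mul_le_mul_of_nonneg_left ht.2 hε0.le
    have h2 : 0 ≤ ε * |x| := mul_nonneg hε0.le habs0
    have h3 : e x t - M t ≤ ε * (T + L) := by nlinarith
    have h4 : ε * (T + L) = (e x t - M t) / 2 := by
      rw [hε]; field_simp
    rw [h4] at h3
    have hMt : Q * τ * (1 - Real.exp (-(t / τ))) = M t := rfl
    rw [hMt] at h
    linarith
end

section
/- Monotone dependence of the 1D short-circuit interface dissociation on the slab width: in the steady 1D exciton problem −De'' = Q − e/τ on (−L,0)∪(0,L), e(±L)=0, e continuous at 0, flux jump −κ e(0) with κ = 2H/τ_diss, the interfacial dissociation flux F(H) := κ e_H(0) is increasing in H and bounded above by the total generation limit, i.e., F(H) ≤ 2LQ for all H > 0. -/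
open Real Filter

lemma cosh_sub_one_le {u : ℝ} (hu : 0 ≤ u) : Real.cosh u - 1 ≤ u * Real.sinh u := by
  set f : ℝ → ℝ := fun x => x * Real.sinh x - Real.cosh x + 1 with hf
  have hderiv : ∀ x : ℝ, HasDerivAt f (x * Real.cosh x) x := by
    intro x
    have h1 : HasDerivAt (fun x : ℝ => x * Real.sinh x)
        (1 * Real.sinh x + x * Real.cosh x) x :=
      (hasDerivAt_id x).mul (Real.hasDerivAt_sinh x)
    have h2 := (h1.sub (Real.hasDerivAt_cosh x)).add_const 1
    exact h2.congr_deriv (by ring)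
  have hmono : MonotoneOn f (Set.Ici 0) := by
    apply monotoneOn_of_deriv_nonneg (convex_Ici 0)
    · exact Continuous.continuousOn (by fun_prop)
    · exact fun x _ => (hderiv x).differentiableAt.differentiableWithinAt
    · intro x hx
      rw [interior_Ici, Set.mem_Ioi] at hx
      rw [(hderiv x).deriv]
      positivity
  have h0 := hmono Set.self_mem_Ici (Set.mem_Ici.2 hu) hu
  simp [hf] at h0
  linarith

lemma myLimEq {f g : ℝ → ℝ} {S : Set ℝ} {x0 v : ℝ} (hne : (nhdsWithin x0 S).NeBot)
    (hfv : Tendsto f (nhdsWithin x0 S) (nhds v))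
    (heq : ∀ x ∈ S, f x = g x) (hg : ContinuousAt g x0) :
    v = g x0 := by
  have h1 : Tendsto g (nhdsWithin x0 S) (nhds v) := by
    refine hfv.congr' ?_
    filter_upwards [self_mem_nhdsWithin] with x hx using heq x hx
  exact tendsto_nhds_unique h1 hg.continuousWithinAt


lemma constOn_Ioo {f : ℝ → ℝ} {a b : ℝ}
    (hf : ∀ x ∈ Set.Ioo a b, HasDerivAt f 0 x) :
    ∀ x ∈ Set.Ioo a b, ∀ y ∈ Set.Ioo a b, f x = f y := by
  have key : ∀ x ∈ Set.Ioo a b, ∀ y ∈ Set.Ioo a b, x ≤ y → f y = f x := by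
    intro x hx y hy hxy
    have hsub : Set.Icc x y ⊆ Set.Ioo a b := fun z hz =>
      ⟨lt_of_lt_of_le hx.1 hz.1, lt_of_le_of_lt hz.2 hy.2⟩
    have := constant_of_has_deriv_right_zero (f := f) (a := x) (b := y)
      (fun z hz => ((hf z (hsub hz)).differentiableAt.continuousAt).continuousWithinAt)
      (fun z hz => (hf z (hsub (Set.Ico_subset_Icc_self hz))).hasDerivWithinAt)
    exact this y ⟨hxy, le_refl y⟩
  intro x hx y hy
  rcases le_total x y with h | h
  · exact (key x hx y hy h).symm
  · exact key y hy x hx h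

lemma struct {a b ℓ m : ℝ} (hℓ : 0 < ℓ) (e : ℝ → ℝ) (hab : a < b)
    (hode : ∀ x ∈ Set.Ioo a b, DifferentiableAt ℝ e x ∧ DifferentiableAt ℝ (deriv e) x ∧
      deriv (deriv e) x = (e x - m) / ℓ ^ 2) :
    ∃ g h : ℝ, ∀ x ∈ Set.Ioo a b,
      e x = m + g * Real.cosh ((x - a)/ℓ) + h * Real.sinh ((x - a)/ℓ) ∧
      deriv e x = (g * Real.sinh ((x - a)/ℓ) + h * Real.cosh ((x - a)/ℓ)) / ℓ := by
  have hℓ0 : ℓ ≠ 0 := hℓ.ne'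
  set G : ℝ → ℝ := fun x =>
    (e x - m) * Real.cosh ((x - a)/ℓ) - ℓ * deriv e x * Real.sinh ((x - a)/ℓ) with hGdef
  set F : ℝ → ℝ := fun x =>
    ℓ * deriv e x * Real.cosh ((x - a)/ℓ) - (e x - m) * Real.sinh ((x - a)/ℓ) with hFdef
  have hder : ∀ x ∈ Set.Ioo a b, HasDerivAt G 0 x ∧ HasDerivAt F 0 x := by
    intro x hx
    obtain ⟨h1, h2, h3⟩ := hode x hx
    have hφ : HasDerivAt (fun y : ℝ => (y - a)/ℓ) (1/ℓ) x := by
      simpa using ((hasDerivAt_id x).sub_const a).div_const ℓ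
    have hc : HasDerivAt (fun y => Real.cosh ((y - a)/ℓ))
        (Real.sinh ((x - a)/ℓ) * (1/ℓ)) x := (Real.hasDerivAt_cosh _).comp x hφ
    have hs : HasDerivAt (fun y => Real.sinh ((y - a)/ℓ))
        (Real.cosh ((x - a)/ℓ) * (1/ℓ)) x := (Real.hasDerivAt_sinh _).comp x hφ
    have he : HasDerivAt e (deriv e x) x := h1.hasDerivAt
    have he' : HasDerivAt (deriv e) (deriv (deriv e) x) x := h2.hasDerivAt
    constructor
    · have hG' : HasDerivAt G
          ((deriv e x * Real.cosh ((x - a)/ℓ) +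
            (e x - m) * (Real.sinh ((x - a)/ℓ) * (1/ℓ))) -
           ((ℓ * deriv (deriv e) x) * Real.sinh ((x - a)/ℓ) +
            (ℓ * deriv e x) * (Real.cosh ((x - a)/ℓ) * (1/ℓ)))) x :=
        ((he.sub_const m).mul hc).sub ((he'.const_mul ℓ).mul hs)
      convert hG' using 1
      rw [h3]; field_simp; ring
    · have hF' : HasDerivAt F
          (((ℓ * deriv (deriv e) x) * Real.cosh ((x - a)/ℓ) +
            (ℓ * deriv e x) * (Real.sinh ((x - a)/ℓ) * (1/ℓ))) -
           (deriv e x * Real.sinh ((x - a)/ℓ) +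
            (e x - m) * (Real.cosh ((x - a)/ℓ) * (1/ℓ)))) x :=
        ((he'.const_mul ℓ).mul hc).sub ((he.sub_const m).mul hs)
      convert hF' using 1
      rw [h3]; field_simp; ring
  have x0mem : (a + b)/2 ∈ Set.Ioo a b := ⟨by linarith [hab], by linarith [hab]⟩
  refine ⟨G ((a+b)/2), F ((a+b)/2), fun x hx => ?_⟩
  have hGx : (e x - m) * Real.cosh ((x - a)/ℓ) - ℓ * deriv e x * Real.sinh ((x - a)/ℓ)
      = G ((a+b)/2) := constOn_Ioo (fun y hy => (hder y hy).1) x hx _ x0mem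
  have hFx : ℓ * deriv e x * Real.cosh ((x - a)/ℓ) - (e x - m) * Real.sinh ((x - a)/ℓ)
      = F ((a+b)/2) := constOn_Ioo (fun y hy => (hder y hy).2) x hx _ x0mem
  have hsq : Real.cosh ((x - a)/ℓ) ^ 2 = Real.sinh ((x - a)/ℓ) ^ 2 + 1 := Real.cosh_sq _
  constructor
  · linear_combination Real.cosh ((x - a)/ℓ) * hGx + Real.sinh ((x - a)/ℓ) * hFx -
      (e x - m) * hsq
  · rw [eq_div_iff hℓ0]
    linear_combination Real.sinh ((x - a)/ℓ) * hGx +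
      Real.cosh ((x - a)/ℓ) * hFx - (ℓ * deriv e x) * hsq

lemma e0_formula {L D τ Q κ : ℝ} (hL : 0 < L) (hD : 0 < D) (hτ : 0 < τ)
    {e : ℝ → ℝ} (hsol : IsSteadyExcitonSol L D τ Q κ e) :
    (Real.sqrt (D*τ) * Real.sinh (L / Real.sqrt (D*τ)) * κ
      + 2*D*Real.cosh (L / Real.sqrt (D*τ))) * e 0
    = 2*D*(Q*τ)*(Real.cosh (L / Real.sqrt (D*τ)) - 1) := by
  obtain ⟨hcont, hemL, heL, hode, dplus, dminus, hdp, hdm, hjump⟩ := hsol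
  set ℓ := Real.sqrt (D*τ) with hℓdef
  have hDτ : (0:ℝ) < D*τ := by positivity
  have hℓ : 0 < ℓ := Real.sqrt_pos.2 hDτ
  have hℓ0 : ℓ ≠ 0 := hℓ.ne'
  have hℓ2 : ℓ ^ 2 = D * τ := Real.sq_sqrt hDτ.le
  -- rewrite the ODE
  have hodeR : ∀ x ∈ Set.Ioo (0:ℝ) L, DifferentiableAt ℝ e x ∧
      DifferentiableAt ℝ (deriv e) x ∧ deriv (deriv e) x = (e x - Q*τ) / ℓ ^ 2 := by
    intro x hx
    obtain ⟨h1, h2, h3⟩ := hode x (Or.inr hx)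
    refine ⟨h1, h2, ?_⟩
    rw [hℓ2, eq_div_iff hDτ.ne']
    have h4 : (Q - e x / τ) * τ = Q * τ - e x := by field_simp
    linear_combination (-τ) * h3 - h4
  have hodeL : ∀ x ∈ Set.Ioo (-L) (0:ℝ), DifferentiableAt ℝ e x ∧
      DifferentiableAt ℝ (deriv e) x ∧ deriv (deriv e) x = (e x - Q*τ) / ℓ ^ 2 := by
    intro x hx
    obtain ⟨h1, h2, h3⟩ := hode x (Or.inl hx)
    refine ⟨h1, h2, ?_⟩
    rw [hℓ2, eq_div_iff hDτ.ne']
    have h4 : (Q - e x / τ) * τ = Q * τ - e x := by field_simp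
    linear_combination (-τ) * h3 - h4
  obtain ⟨gp, hp, hstR⟩ := struct hℓ e hL hodeR
  obtain ⟨gm, hm, hstL⟩ := struct hℓ e (by linarith : -L < 0) hodeL
  -- NeBot facts
  have hneR0 : (nhdsWithin (0:ℝ) (Set.Ioo 0 L)).NeBot := by
    apply mem_closure_iff_nhdsWithin_neBot.mp
    rw [closure_Ioo hL.ne]; exact ⟨le_refl 0, hL.le⟩
  have hneRL : (nhdsWithin L (Set.Ioo 0 L)).NeBot := by
    apply mem_closure_iff_nhdsWithin_neBot.mp
    rw [closure_Ioo hL.ne]; exact ⟨hL.le, le_refl L⟩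
  have hneLm : (nhdsWithin (-L) (Set.Ioo (-L) (0:ℝ))).NeBot := by
    apply mem_closure_iff_nhdsWithin_neBot.mp
    rw [closure_Ioo (by linarith : -L ≠ 0)]
    exact ⟨le_refl (-L), by linarith⟩
  have hneL0 : (nhdsWithin (0:ℝ) (Set.Ioo (-L) (0:ℝ))).NeBot := by
    apply mem_closure_iff_nhdsWithin_neBot.mp
    rw [closure_Ioo (by linarith : -L ≠ 0)]
    exact ⟨by linarith, le_refl 0⟩
  -- continuity limits of e
  have hsubR : Set.Ioo (0:ℝ) L ⊆ Set.Icc (-L) L := fun z hz =>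
    ⟨by linarith [hz.1], hz.2.le⟩
  have hsubL : Set.Ioo (-L) (0:ℝ) ⊆ Set.Icc (-L) L := fun z hz =>
    ⟨hz.1.le, by linarith [hz.2]⟩
  have hE1 : e 0 = (fun y : ℝ => Q*τ + gp * Real.cosh ((y - 0)/ℓ) + hp * Real.sinh ((y - 0)/ℓ)) 0 := by
    refine myLimEq (x0 := 0) hneR0 ?_ (fun x hx => (hstR x hx).1) (by fun_prop)
    exact ((hcont.continuousWithinAt ⟨by linarith, hL.le⟩).mono_left
      (nhdsWithin_mono 0 hsubR))
  have hE2 : e L = (fun y : ℝ => Q*τ + gp * Real.cosh ((y - 0)/ℓ) + hp * Real.sinh ((y - 0)/ℓ)) L := by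
    refine myLimEq (x0 := L) hneRL ?_ (fun x hx => (hstR x hx).1) (by fun_prop)
    exact ((hcont.continuousWithinAt ⟨by linarith, le_refl L⟩).mono_left
      (nhdsWithin_mono L hsubR))
  have hE3 : dplus = (fun y : ℝ => (gp * Real.sinh ((y - 0)/ℓ) + hp * Real.cosh ((y - 0)/ℓ)) / ℓ) 0 := by
    refine myLimEq (x0 := 0) hneR0 ?_ (fun x hx => (hstR x hx).2)
      (by fun_prop (disch := assumption))
    exact hdp.mono_left (nhdsWithin_mono 0 (fun z hz => hz.1))
  have hE4 : e (-L) = (fun y : ℝ => Q*τ + gm * Real.cosh ((y - -L)/ℓ) + hm * Real.sinh ((y - -L)/ℓ)) (-L) := by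
    refine myLimEq (x0 := -L) hneLm ?_ (fun x hx => (hstL x hx).1) (by fun_prop)
    exact ((hcont.continuousWithinAt ⟨le_refl (-L), by linarith⟩).mono_left
      (nhdsWithin_mono (-L) hsubL))
  have hE5 : e 0 = (fun y : ℝ => Q*τ + gm * Real.cosh ((y - -L)/ℓ) + hm * Real.sinh ((y - -L)/ℓ)) 0 := by
    refine myLimEq (x0 := 0) hneL0 ?_ (fun x hx => (hstL x hx).1) (by fun_prop)
    exact ((hcont.continuousWithinAt ⟨by linarith, hL.le⟩).mono_left
      (nhdsWithin_mono 0 hsubL))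
  have hE6 : dminus = (fun y : ℝ => (gm * Real.sinh ((y - -L)/ℓ) + hm * Real.cosh ((y - -L)/ℓ)) / ℓ) 0 := by
    refine myLimEq (x0 := 0) hneL0 ?_ (fun x hx => (hstL x hx).2)
      (by fun_prop (disch := assumption))
    exact hdm.mono_left (nhdsWithin_mono 0 (fun z hz => hz.2))
  simp only at hE1 hE2 hE3 hE4 hE5 hE6
  -- clean up
  rw [show ((0:ℝ) - 0)/ℓ = 0 by ring, Real.cosh_zero, Real.sinh_zero] at hE1 hE3
  rw [show ((-L:ℝ) - -L)/ℓ = 0 by ring, Real.cosh_zero, Real.sinh_zero] at hE4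
  rw [show ((L:ℝ) - 0)/ℓ = L/ℓ by ring] at hE2
  rw [show ((0:ℝ) - -L)/ℓ = L/ℓ by ring] at hE5 hE6
  rw [heL] at hE2
  rw [hemL] at hE4
  set c := Real.cosh (L/ℓ)
  set s := Real.sinh (L/ℓ)
  have hcs : c ^ 2 = s ^ 2 + 1 := Real.cosh_sq _
  have hE3' : dplus * ℓ = gp * 0 + hp * 1 := by rw [hE3]; field_simp
  have hE6' : dminus * ℓ = gm * s + hm * c := by rw [hE6]; field_simp
  linear_combination (ℓ*s) * hjump + (-(D*s)) * hE6' + (D*s) * hE3' + (D*c) * hE5 +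
    (-D) * hE2 + (D*c) * hE1 + (D*(s^2 - c^2)) * hE4 + (-(D*(Q*τ))) * hcs

theorem interface_dissociation_flux_monotone_and_bounded
    (L D τ Q τdiss : ℝ) (hL : 0 < L) (hD : 0 < D) (hτ : 0 < τ)
    (hQ : 0 < Q) (hτd : 0 < τdiss) :
    -- F(H) = (2H/τ_diss) e_H(0) is increasing in H
    (∀ H₁ H₂ : ℝ, 0 < H₁ → H₁ ≤ H₂ →
      ∀ e₁ e₂ : ℝ → ℝ,
        IsSteadyExcitonSol L D τ Q (2 * H₁ / τdiss) e₁ →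
        IsSteadyExcitonSol L D τ Q (2 * H₂ / τdiss) e₂ →
        (2 * H₁ / τdiss) * e₁ 0 ≤ (2 * H₂ / τdiss) * e₂ 0) ∧
    -- and bounded above by the total generation 2LQ
    (∀ H : ℝ, 0 < H → ∀ e : ℝ → ℝ,
        IsSteadyExcitonSol L D τ Q (2 * H / τdiss) e →
        (2 * H / τdiss) * e 0 ≤ 2 * L * Q) := by
  have hDτ : (0:ℝ) < D*τ := by positivity
  set ℓ := Real.sqrt (D*τ) with hℓdef
  have hℓ : 0 < ℓ := Real.sqrt_pos.2 hDτ
  have hℓ2 : ℓ ^ 2 = D * τ := Real.sq_sqrt hDτ.le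
  set c := Real.cosh (L/ℓ) with hcdef
  set s := Real.sinh (L/ℓ) with hsdef
  have hc1 : 1 ≤ c := Real.one_le_cosh _
  have hs0 : 0 < s := by rw [hsdef]; exact Real.sinh_pos_iff.2 (div_pos hL hℓ)
  set N := 2*D*(Q*τ)*(c - 1) with hNdef
  have hN0 : 0 ≤ N := by
    apply mul_nonneg (by positivity) (by linarith)
  constructor
  · intro H₁ H₂ hH₁ hle e₁ e₂ hs₁ hs₂
    have hH₂ : 0 < H₂ := lt_of_lt_of_le hH₁ hle
    set κ₁ := 2 * H₁ / τdiss with hκ₁def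
    set κ₂ := 2 * H₂ / τdiss with hκ₂def
    have hκ₁ : 0 < κ₁ := by rw [hκ₁def]; positivity
    have hκ₂ : 0 < κ₂ := by rw [hκ₂def]; positivity
    have hκle : κ₁ ≤ κ₂ := by
      rw [hκ₁def, hκ₂def]
      gcongr
    have hF1 := e0_formula hL hD hτ hs₁
    have hF2 := e0_formula hL hD hτ hs₂
    rw [← hℓdef, ← hcdef, ← hsdef, ← hNdef] at hF1 hF2
    have hd₁ : 0 < ℓ * s * κ₁ + 2*D*c := by
      have : 0 < ℓ * s * κ₁ := by positivity
      nlinarith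
    have hd₂ : 0 < ℓ * s * κ₂ + 2*D*c := by
      have : 0 < ℓ * s * κ₂ := by positivity
      nlinarith
    have he₁ : e₁ 0 = N / (ℓ * s * κ₁ + 2*D*c) := by
      rw [eq_div_iff hd₁.ne']; linear_combination hF1
    have he₂ : e₂ 0 = N / (ℓ * s * κ₂ + 2*D*c) := by
      rw [eq_div_iff hd₂.ne']; linear_combination hF2
    have hprod : 0 ≤ N * (2*D*c) * (κ₂ - κ₁) := by
      apply mul_nonneg (mul_nonneg hN0 (by positivity)) (by linarith)
    have key : (κ₁ * e₁ 0) * ((ℓ*s*κ₁ + 2*D*c) * (ℓ*s*κ₂ + 2*D*c)) ≤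
        (κ₂ * e₂ 0) * ((ℓ*s*κ₁ + 2*D*c) * (ℓ*s*κ₂ + 2*D*c)) := by
      have lhs_eq : (κ₁ * e₁ 0) * ((ℓ*s*κ₁ + 2*D*c) * (ℓ*s*κ₂ + 2*D*c))
          = κ₁ * N * (ℓ*s*κ₂ + 2*D*c) := by
        linear_combination (κ₁ * (ℓ*s*κ₂ + 2*D*c)) * hF1
      have rhs_eq : (κ₂ * e₂ 0) * ((ℓ*s*κ₁ + 2*D*c) * (ℓ*s*κ₂ + 2*D*c))
          = κ₂ * N * (ℓ*s*κ₁ + 2*D*c) := by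
        linear_combination (κ₂ * (ℓ*s*κ₁ + 2*D*c)) * hF2
      rw [lhs_eq, rhs_eq]
      have expand : κ₂ * N * (ℓ*s*κ₁ + 2*D*c) - κ₁ * N * (ℓ*s*κ₂ + 2*D*c)
          = N * (2*D*c) * (κ₂ - κ₁) := by ring
      linarith
    exact le_of_mul_le_mul_right key (by positivity)
  · intro H hH e hsol
    set κ := 2 * H / τdiss with hκdef
    have hκ : 0 < κ := by rw [hκdef]; positivity
    have hF := e0_formula hL hD hτ hsol
    rw [← hℓdef, ← hcdef, ← hsdef, ← hNdef] at hF
    have hd : 0 < ℓ * s * κ + 2*D*c := by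
      have : 0 < ℓ * s * κ := by positivity
      nlinarith
    have hkey : c - 1 ≤ (L/ℓ) * s := by
      rw [hcdef, hsdef]
      exact cosh_sub_one_le (by positivity)
    have hls : ℓ * (c - 1) ≤ L * s := by
      have h2 := mul_le_mul_of_nonneg_left hkey hℓ.le
      calc ℓ * (c - 1) ≤ ℓ * ((L/ℓ) * s) := h2
        _ = L * s := by field_simp
    have hN2 : N ≤ 2 * L * Q * (ℓ * s) := by
      have h3 := mul_le_mul_of_nonneg_left hls (by positivity : (0:ℝ) ≤ 2*Q*ℓ)
      have h4 : N = 2*Q*ℓ*(ℓ*(c - 1)) := by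
        rw [hNdef]; linear_combination (-(2*Q*(c-1))) * hℓ2
      have h5 : 2*Q*ℓ*(L*s) = 2*L*Q*(ℓ*s) := by ring
      linarith
    have key : (κ * e 0) * (ℓ*s*κ + 2*D*c) ≤ (2*L*Q) * (ℓ*s*κ + 2*D*c) := by
      have lhs_eq : (κ * e 0) * (ℓ*s*κ + 2*D*c) = κ * N := by
        linear_combination κ * hF
      rw [lhs_eq]
      have h6 := mul_le_mul_of_nonneg_left hN2 hκ.le
      have h7 : κ * (2*L*Q*(ℓ*s)) = 2*L*Q*(ℓ*s*κ) := by ring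
      have h8 : (2*L*Q) * (ℓ*s*κ + 2*D*c) = 2*L*Q*(ℓ*s*κ) + 2*L*Q*(2*D*c) := by ring
      have h9 : 0 ≤ 2*L*Q*(2*D*c) := by positivity
      linarith
    exact le_of_mul_le_mul_right key hd
end
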